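/- arXiv:2307.12466 — 2 statements merged into one kernel-verified Lean document; each statement's English description precedes it below -/
import Mathlib

section
/- Let Ω ⊆ ℝ^{n+1} be open, A : Ω → (symmetric (n+1)×(n+1) real matrices) be C¹, u₁, u₂ : Ω → ℝ be C², f⃗₁, f⃗₂ : Ω → ℝ^{n+1} be C¹, and φ₁, φ₂ : Ω → ℝ be continuous. Assume u₂(x) ≠ 0 for all x ∈ Ω and that div(A∇u_i) = div(f⃗_i) + φ_i pointwise on Ω for i = 1,2. Then the ratio w = u₁/u₂ satisfies, pointwise on Ω, div(u₂² A∇w) = div(u₂ f⃗₁ − u₁ f⃗₂) + (f⃗₂ · ∇u₁ − f⃗₁ · ∇u₂) + (u₂ φ₁ − u₁ φ₂). -/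
open MeasureTheory Metric Set
open scoped ContDiff

noncomputable section

/-- Ambient space `ℝ^{n+1}`. -/
abbrev E (n : ℕ) := EuclideanSpace ℝ (Fin (n + 1))

/-- Partial derivative `∂_i f` of a scalar function. -/
def pd (n : ℕ) (f : E n → ℝ) (i : Fin (n + 1)) (x : E n) : ℝ :=
  fderiv ℝ f x (EuclideanSpace.single i 1)

/-- Divergence `div V = ∑ i ∂_i V_i` of a vector field. -/
def vdiv (n : ℕ) (V : E n → Fin (n + 1) → ℝ) (x : E n) : ℝ :=
  ∑ i, fderiv ℝ (fun y => V y i) x (EuclideanSpace.single i 1)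

private lemma pd_div_sq {n : ℕ} (u₁ u₂ : E n → ℝ) (y : E n) (j : Fin (n+1))
    (h1 : DifferentiableAt ℝ u₁ y) (h2 : DifferentiableAt ℝ u₂ y) (hne : u₂ y ≠ 0) :
    (u₂ y)^2 * pd n (fun z => u₁ z / u₂ z) j y = u₂ y * pd n u₁ j y - u₁ y * pd n u₂ j y := by
  have hinv : DifferentiableAt ℝ (fun z => (u₂ z)⁻¹) y := h2.inv hne
  have hfi : fderiv ℝ (fun z => (u₂ z)⁻¹) y (EuclideanSpace.single j 1)
      = -((u₂ y) ^ 2)⁻¹ * fderiv ℝ u₂ y (EuclideanSpace.single j 1) := by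
    have hcomp : (fun z => (u₂ z)⁻¹) = (fun t : ℝ => t⁻¹) ∘ u₂ := rfl
    rw [hcomp, fderiv_comp y (differentiableAt_inv hne) h2, fderiv_inv]
    simp [smul_eq_mul]; ring
  have hw : (fun z => u₁ z / u₂ z) = fun z => u₁ z * (u₂ z)⁻¹ := by
    funext z; rw [div_eq_mul_inv]
  simp only [pd, hw, fderiv_fun_mul h1 hinv, ContinuousLinearMap.add_apply,
    ContinuousLinearMap.smul_apply, smul_eq_mul, hfi]
  field_simp; ring

private lemma fderiv_mul_sub_apply {n : ℕ} {p q r s : E n → ℝ} (x v : E n)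
    (hp : DifferentiableAt ℝ p x) (hq : DifferentiableAt ℝ q x)
    (hr : DifferentiableAt ℝ r x) (hs : DifferentiableAt ℝ s x) :
    fderiv ℝ (fun y => p y * q y - r y * s y) x v =
      fderiv ℝ p x v * q x + p x * fderiv ℝ q x v -
        (fderiv ℝ r x v * s x + r x * fderiv ℝ s x v) := by
  rw [fderiv_fun_sub (hp.fun_mul hq) (hr.fun_mul hs), ContinuousLinearMap.sub_apply,
    fderiv_fun_mul hp hq, fderiv_fun_mul hr hs]
  simp only [ContinuousLinearMap.add_apply, ContinuousLinearMap.smul_apply, smul_eq_mul]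
  ring

/-- Lemma: equation satisfied by the ratio.
If `div(A∇uᵢ) = div(f⃗ᵢ) + φᵢ` on an open set `Ω` where `u₂ ≠ 0`, then the ratio
`w = u₁/u₂` satisfies
`div(u₂² A∇w) = div(u₂f⃗₁ − u₁f⃗₂) + (f⃗₂·∇u₁ − f⃗₁·∇u₂) + (u₂φ₁ − u₁φ₂)` pointwise on `Ω`. -/
theorem stmt0 (n : ℕ) (Ω : Set (E n)) (hΩ : IsOpen Ω)
    (A : E n → Matrix (Fin (n + 1)) (Fin (n + 1)) ℝ)
    (u₁ u₂ : E n → ℝ) (f₁ f₂ : E n → Fin (n + 1) → ℝ) (φ₁ φ₂ : E n → ℝ)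
    (hAsymm : ∀ x ∈ Ω, (A x).IsSymm)
    (hA : ∀ i j, ContDiffOn ℝ 1 (fun x => A x i j) Ω)
    (hu₁ : ContDiffOn ℝ 2 u₁ Ω) (hu₂ : ContDiffOn ℝ 2 u₂ Ω)
    (hf₁ : ∀ i, ContDiffOn ℝ 1 (fun x => f₁ x i) Ω)
    (hf₂ : ∀ i, ContDiffOn ℝ 1 (fun x => f₂ x i) Ω)
    (hφ₁ : ContinuousOn φ₁ Ω) (hφ₂ : ContinuousOn φ₂ Ω)
    (hu₂ne : ∀ x ∈ Ω, u₂ x ≠ 0)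
    (heq₁ : ∀ x ∈ Ω,
      vdiv n (fun y i => ∑ j, A y i j * pd n u₁ j y) x = vdiv n f₁ x + φ₁ x)
    (heq₂ : ∀ x ∈ Ω,
      vdiv n (fun y i => ∑ j, A y i j * pd n u₂ j y) x = vdiv n f₂ x + φ₂ x) :
    ∀ x ∈ Ω,
      vdiv n (fun y i => (u₂ y) ^ 2 * ∑ j, A y i j * pd n (fun z => u₁ z / u₂ z) j y) x =
        vdiv n (fun y i => u₂ y * f₁ y i - u₁ y * f₂ y i) x +
          ((∑ i, f₂ x i * pd n u₁ i x) - ∑ i, f₁ x i * pd n u₂ i x) +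
          (u₂ x * φ₁ x - u₁ x * φ₂ x) := by
  intro x hx
  -- general differentiability helper
  have diffAt : ∀ {g : E n → ℝ}, ContDiffOn ℝ 1 g Ω → ∀ y ∈ Ω, DifferentiableAt ℝ g y :=
    fun h y hy => (h.differentiableOn one_ne_zero).differentiableAt (hΩ.mem_nhds hy)
  have hpdC : ∀ {u : E n → ℝ}, ContDiffOn ℝ 2 u Ω →
      ∀ j, ContDiffOn ℝ 1 (fun y => pd n u j y) Ω := by
    intro u hu j
    have h2 : ContDiffOn ℝ 1 (fderiv ℝ u) Ω :=
      ((contDiffOn_succ_iff_fderiv_of_isOpen (n := 1) hΩ).mp (by exact_mod_cast hu)).2.2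
    exact h2.clm_apply contDiffOn_const
  have hd1 : ∀ j, DifferentiableAt ℝ (fun y => pd n u₁ j y) x := fun j =>
    diffAt (hpdC hu₁ j) x hx
  have hd2 : ∀ j, DifferentiableAt ℝ (fun y => pd n u₂ j y) x := fun j =>
    diffAt (hpdC hu₂ j) x hx
  have hdA : ∀ i j, DifferentiableAt ℝ (fun y => A y i j) x := fun i j =>
    diffAt (hA i j) x hx
  have hdu₁ : DifferentiableAt ℝ u₁ x := diffAt (hu₁.of_le one_le_two) x hx
  have hdu₂ : DifferentiableAt ℝ u₂ x := diffAt (hu₂.of_le one_le_two) x hx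
  have hdf₁ : ∀ i, DifferentiableAt ℝ (fun y => f₁ y i) x := fun i => diffAt (hf₁ i) x hx
  have hdf₂ : ∀ i, DifferentiableAt ℝ (fun y => f₂ y i) x := fun i => diffAt (hf₂ i) x hx
  have hG₁ : ∀ i, DifferentiableAt ℝ (fun y => ∑ j, A y i j * pd n u₁ j y) x := fun i =>
    DifferentiableAt.fun_sum fun j _ => (hdA i j).mul (hd1 j)
  have hG₂ : ∀ i, DifferentiableAt ℝ (fun y => ∑ j, A y i j * pd n u₂ j y) x := fun i =>
    DifferentiableAt.fun_sum fun j _ => (hdA i j).mul (hd2 j)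
  -- the eventual equality
  have hEq : ∀ i, (fun y => (u₂ y) ^ 2 * ∑ j, A y i j * pd n (fun z => u₁ z / u₂ z) j y)
      =ᶠ[nhds x] (fun y => u₂ y * (∑ j, A y i j * pd n u₁ j y) -
        u₁ y * (∑ j, A y i j * pd n u₂ j y)) := by
    intro i
    filter_upwards [hΩ.mem_nhds hx] with y hy
    have key : ∀ j, (u₂ y)^2 * pd n (fun z => u₁ z / u₂ z) j y
        = u₂ y * pd n u₁ j y - u₁ y * pd n u₂ j y := fun j =>
      pd_div_sq u₁ u₂ y j (diffAt (hu₁.of_le one_le_two) y hy)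
        (diffAt (hu₂.of_le one_le_two) y hy) (hu₂ne y hy)
    simp only [Finset.mul_sum, ← Finset.sum_sub_distrib]
    refine Finset.sum_congr rfl fun j _ => ?_
    linear_combination A y i j * key j
  simp only [vdiv] at heq₁ heq₂ ⊢
  have hD₁ := heq₁ x hx
  have hD₂ := heq₂ x hx
  -- compute LHS
  have hLHS : ∀ i, fderiv ℝ
      (fun y => (u₂ y) ^ 2 * ∑ j, A y i j * pd n (fun z => u₁ z / u₂ z) j y) x
      (EuclideanSpace.single i 1) =
      pd n u₂ i x * (∑ j, A x i j * pd n u₁ j x)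
        + u₂ x * fderiv ℝ (fun y => ∑ j, A y i j * pd n u₁ j y) x (EuclideanSpace.single i 1)
        - (pd n u₁ i x * (∑ j, A x i j * pd n u₂ j x)
        + u₁ x * fderiv ℝ (fun y => ∑ j, A y i j * pd n u₂ j y) x (EuclideanSpace.single i 1)) := by
    intro i
    rw [(hEq i).fderiv_eq]
    rw [fderiv_mul_sub_apply x (EuclideanSpace.single i 1) hdu₂ (hG₁ i) hdu₁ (hG₂ i)]
    simp only [pd]
  have hRHS : ∀ i, fderiv ℝ (fun y => u₂ y * f₁ y i - u₁ y * f₂ y i) x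
      (EuclideanSpace.single i 1) =
      pd n u₂ i x * f₁ x i
        + u₂ x * fderiv ℝ (fun y => f₁ y i) x (EuclideanSpace.single i 1)
        - (pd n u₁ i x * f₂ x i
        + u₁ x * fderiv ℝ (fun y => f₂ y i) x (EuclideanSpace.single i 1)) := by
    intro i
    rw [fderiv_mul_sub_apply x (EuclideanSpace.single i 1) hdu₂ (hdf₁ i) hdu₁ (hdf₂ i)]
    simp only [pd]
  -- symmetry fact
  have hsym : ∑ i, pd n u₂ i x * (∑ j, A x i j * pd n u₁ j x)
      = ∑ i, pd n u₁ i x * (∑ j, A x i j * pd n u₂ j x) := by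
    simp only [Finset.mul_sum]
    rw [Finset.sum_comm]
    refine Finset.sum_congr rfl fun i _ => Finset.sum_congr rfl fun j _ => ?_
    rw [(hAsymm x hx).apply i j]
    ring
  calc (∑ i, fderiv ℝ
      (fun y => (u₂ y) ^ 2 * ∑ j, A y i j * pd n (fun z => u₁ z / u₂ z) j y) x
      (EuclideanSpace.single i 1))
      = ∑ i, (pd n u₂ i x * (∑ j, A x i j * pd n u₁ j x)
        + u₂ x * fderiv ℝ (fun y => ∑ j, A y i j * pd n u₁ j y) x (EuclideanSpace.single i 1)
        - (pd n u₁ i x * (∑ j, A x i j * pd n u₂ j x)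
        + u₁ x * fderiv ℝ (fun y => ∑ j, A y i j * pd n u₂ j y) x (EuclideanSpace.single i 1))) :=
        Finset.sum_congr rfl fun i _ => hLHS i
    _ = _ := by
        simp only [Finset.sum_sub_distrib, Finset.sum_add_distrib, ← Finset.mul_sum]
        rw [Finset.sum_congr rfl fun i _ => hRHS i]
        simp only [Finset.sum_sub_distrib, Finset.sum_add_distrib, ← Finset.mul_sum]
        have hcA : ∑ i, pd n u₁ i x * f₂ x i = ∑ i, f₂ x i * pd n u₁ i x :=
          Finset.sum_congr rfl fun i _ => mul_comm _ _
        have hcB : ∑ i, pd n u₂ i x * f₁ x i = ∑ i, f₁ x i * pd n u₂ i x :=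
          Finset.sum_congr rfl fun i _ => mul_comm _ _
        simp only [pd] at hsym hD₁ hD₂ hcA hcB ⊢
        linear_combination u₂ x * hD₁ - u₁ x * hD₂ + hsym + hcA - hcB
end
end

section
/- Let Ā be a constant symmetric positive-definite (n+1)×(n+1) matrix with Ā^{i,n+1} = Ā^{n+1,i} = 0 for all i ≤ n, let κ = (Ā^{nn}/Ā^{n+1,n+1})^{1/2}, and define ū_Ā(x) = √((x_n + √(x_n² + κ² x_{n+1}²))/2). Then: (i) ū_Ā is C^∞ on ℝ^{n+1} \ S̄ and Σ_{i,j} Ā^{ij} ∂_i∂_j ū_Ā = 0 there; (ii) ū_Ā(x) > 0 for x ∉ S̄ and ū_Ā(x) = 0 for x ∈ S̄; (iii) ū_Ā(x^T, t·x^⊥) = t^{1/2} ū_Ā(x^T, x^⊥) for every t > 0. -/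
open MeasureTheory Metric Set
open scoped ContDiff

noncomputable section

/-- Index of the paper's coordinate `x_n`. -/
def idxN (n : ℕ) : Fin (n + 1) := ⟨n - 1, by omega⟩
/-- Index of the paper's coordinate `x_{n+1}`. -/
def idxN1 (n : ℕ) : Fin (n + 1) := ⟨n, by omega⟩

/-- The closed slit `S̄ = {x_n ≤ 0, x_{n+1} = 0}`. -/
def closedSlit (n : ℕ) : Set (E n) := {x | x (idxN n) ≤ 0 ∧ x (idxN1 n) = 0}

/-- `κ(Ā) = (Ā^{nn}/Ā^{n+1,n+1})^{1/2}`. -/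
def kappa (n : ℕ) (A : Matrix (Fin (n + 1)) (Fin (n + 1)) ℝ) : ℝ :=
  Real.sqrt (A (idxN n) (idxN n) / A (idxN1 n) (idxN1 n))

/-- The `1/2`-homogeneous solution `ū_Ā(x) = √((x_n + √(x_n² + κ²x_{n+1}²))/2)`. -/
def ubar (n : ℕ) (κ : ℝ) (x : E n) : ℝ :=
  Real.sqrt ((x (idxN n) + Real.sqrt ((x (idxN n)) ^ 2 + κ ^ 2 * (x (idxN1 n)) ^ 2)) / 2)

/-- The point `(x^T, t·x^⊥)`: same first `n-1` coordinates, last two scaled by `t`. -/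
def scalePerp (n : ℕ) (t : ℝ) (x : E n) : E n :=
  WithLp.toLp 2 (fun i : Fin (n + 1) => if (i : ℕ) < n - 1 then x i else t * x i)

set_option maxHeartbeats 1000000

section Aux

variable {n : ℕ}

def Pa (n : ℕ) : E n →L[ℝ] ℝ := EuclideanSpace.proj (idxN n)
def Pb (n : ℕ) : E n →L[ℝ] ℝ := EuclideanSpace.proj (idxN1 n)

def qf (n : ℕ) (κ : ℝ) (x : E n) : ℝ := (x (idxN n))^2 + κ^2 * (x (idxN1 n))^2
def rf (n : ℕ) (κ : ℝ) (x : E n) : ℝ := Real.sqrt (qf n κ x)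
def Ga (n : ℕ) (κ : ℝ) (y : E n) : ℝ := ubar n κ y * (2 * rf n κ y)⁻¹
def Gb (n : ℕ) (κ : ℝ) (y : E n) : ℝ :=
  κ^2 * y (idxN1 n) * (4 * (rf n κ y * ubar n κ y))⁻¹

lemma ubar_eq (κ : ℝ) (x : E n) : ubar n κ x = Real.sqrt ((x (idxN n) + rf n κ x) / 2) := rfl

lemma idx_ne (hn : 2 ≤ n) : idxN n ≠ idxN1 n := by
  simp only [idxN, idxN1, Ne, Fin.mk.injEq]; omega

lemma mem_compl_slit {x : E n} (hx : x ∈ (closedSlit n)ᶜ) :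
    0 < x (idxN n) ∨ x (idxN1 n) ≠ 0 := by
  by_contra h
  push_neg at h
  exact hx ⟨h.1, h.2⟩

lemma qf_pos {κ : ℝ} (hκ : 0 < κ) {x : E n} (hx : x ∈ (closedSlit n)ᶜ) : 0 < qf n κ x := by
  rcases mem_compl_slit hx with h | h
  · have : 0 < (x (idxN n))^2 := by positivity
    have h2 : 0 ≤ κ^2 * (x (idxN1 n))^2 := by positivity
    unfold qf; linarith
  · have : 0 < κ^2 * (x (idxN1 n))^2 := by positivity
    have h2 : 0 ≤ (x (idxN n))^2 := sq_nonneg _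
    unfold qf; linarith

lemma rf_pos {κ : ℝ} (hκ : 0 < κ) {x : E n} (hx : x ∈ (closedSlit n)ᶜ) : 0 < rf n κ x :=
  Real.sqrt_pos.2 (qf_pos hκ hx)

lemma rf_sq (κ : ℝ) (x : E n) : (rf n κ x)^2 = qf n κ x :=
  Real.sq_sqrt (by unfold qf; positivity)

lemma sum_pos {κ : ℝ} (hκ : 0 < κ) {x : E n} (hx : x ∈ (closedSlit n)ᶜ) :
    0 < x (idxN n) + rf n κ x := by
  rcases mem_compl_slit hx with h | h
  · have := Real.sqrt_nonneg (qf n κ x)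
    have : 0 ≤ rf n κ x := this
    linarith
  · have h1 : |x (idxN n)| < rf n κ x := by
      rw [← Real.sqrt_sq_eq_abs]
      apply Real.sqrt_lt_sqrt (sq_nonneg _)
      have : 0 < κ^2 * (x (idxN1 n))^2 := by positivity
      unfold qf; linarith
    have := neg_abs_le (x (idxN n))
    linarith
lemma ubar_pos {κ : ℝ} (hκ : 0 < κ) {x : E n} (hx : x ∈ (closedSlit n)ᶜ) : 0 < ubar n κ x := by
  rw [ubar_eq]
  exact Real.sqrt_pos.2 (by linarith [sum_pos hκ hx])

lemma ubar_sq {κ : ℝ} (x : E n) (h : 0 ≤ x (idxN n) + rf n κ x) :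
    (ubar n κ x)^2 = (x (idxN n) + rf n κ x) / 2 := by
  rw [ubar_eq]; exact Real.sq_sqrt (by linarith)

lemma hasFDerivAt_coord (i : Fin (n+1)) (x : E n) :
    HasFDerivAt (fun y : E n => y i) (EuclideanSpace.proj i : E n →L[ℝ] ℝ) x :=
  (EuclideanSpace.proj i : E n →L[ℝ] ℝ).hasFDerivAt

lemma hasFDerivAt_qf (κ : ℝ) (x : E n) :
    HasFDerivAt (qf n κ)
      ((2 * x (idxN n)) • Pa n + (2 * κ^2 * x (idxN1 n)) • Pb n) x := by
  have ha := hasFDerivAt_coord (idxN n) x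
  have hb := hasFDerivAt_coord (idxN1 n) x
  have h1 := ha.mul ha
  have h2 := (hb.mul hb).const_mul (κ^2)
  have h3 := h1.add h2
  have heq : qf n κ = fun y : E n => y (idxN n) * y (idxN n) + κ^2 * (y (idxN1 n) * y (idxN1 n)) := by
    funext y; unfold qf; ring
  rw [heq]
  refine h3.congr_fderiv ?_
  ext v
  simp [Pa, Pb, smul_smul]
  ring

lemma hasFDerivAt_rf {κ : ℝ} {x : E n} (hq : 0 < qf n κ x) :
    HasFDerivAt (rf n κ)
      ((x (idxN n) / rf n κ x) • Pa n + (κ^2 * x (idxN1 n) / rf n κ x) • Pb n) x := by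
  have h := (hasFDerivAt_qf κ x).sqrt (ne_of_gt hq)
  have hr : 0 < rf n κ x := Real.sqrt_pos.2 hq
  have heq : rf n κ = fun y => Real.sqrt (qf n κ y) := rfl
  rw [heq]
  refine h.congr_fderiv ?_
  ext v
  have : Real.sqrt (qf n κ x) = rf n κ x := rfl
  simp [this, Pa, Pb, smul_smul]
  field_simp

lemma hasFDerivAt_ubar {κ : ℝ} (hκ : 0 < κ) {x : E n} (hx : x ∈ (closedSlit n)ᶜ) :
    HasFDerivAt (ubar n κ) (Ga n κ x • Pa n + Gb n κ x • Pb n) x := by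
  have hq := qf_pos hκ hx
  have hr := rf_pos hκ hx
  have hs := sum_pos hκ hx
  have hu := ubar_pos hκ hx
  have hDr := hasFDerivAt_rf hq
  have hw := ((hasFDerivAt_coord (idxN n) x).add hDr).const_mul (2:ℝ)⁻¹
  have hne : (2:ℝ)⁻¹ * (x (idxN n) + rf n κ x) ≠ 0 := by positivity
  have h := hw.sqrt hne
  have heq : ubar n κ = fun y => Real.sqrt ((2:ℝ)⁻¹ * (y (idxN n) + rf n κ y)) := by
    funext y; rw [ubar_eq]; ring_nf
  have huval : Real.sqrt ((2:ℝ)⁻¹ * (x (idxN n) + rf n κ x)) = ubar n κ x := by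
    rw [ubar_eq]; ring_nf
  have husq := ubar_sq (κ := κ) x (le_of_lt hs)
  rw [heq]
  refine h.congr_fderiv ?_
  ext v
  simp only [Pi.add_apply, huval]
  simp [Ga, Gb, Pa, Pb, smul_smul]
  have hrne : rf n κ x ≠ 0 := ne_of_gt hr
  have hune : ubar n κ x ≠ 0 := ne_of_gt hu
  field_simp
  linear_combination (-8 * v (idxN n)) * husq


lemma hasFDerivAt_Ga {κ : ℝ} (hκ : 0 < κ) {x : E n} (hx : x ∈ (closedSlit n)ᶜ) :
    HasFDerivAt (Ga n κ)
      ((ubar n κ x * (rf n κ x - 2 * x (idxN n)) / (4 * rf n κ x ^ 3)) • Pa n +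
       (-(κ^2 * x (idxN1 n) * (2 * x (idxN n) + rf n κ x)) / (8 * rf n κ x ^ 3 * ubar n κ x)) • Pb n) x := by
  have hq := qf_pos hκ hx
  have hr := rf_pos hκ hx
  have hs := sum_pos hκ hx
  have hu := ubar_pos hκ hx
  have husq := ubar_sq (κ := κ) x (le_of_lt hs)
  have hrsq := rf_sq (n := n) κ x
  have hDr := hasFDerivAt_rf hq
  have hDu := hasFDerivAt_ubar hκ hx
  have h2 : HasFDerivAt (fun y : E n => (2 * rf n κ y)⁻¹)
      ((-((2 * rf n κ x)^2)⁻¹) • ((2:ℝ) • ((x (idxN n) / rf n κ x) • Pa n + (κ ^ 2 * x (idxN1 n) / rf n κ x) • Pb n))) x := by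
    have := (hasDerivAt_inv (x := 2 * rf n κ x) (by positivity)).comp_hasFDerivAt x (hDr.const_mul 2)
    exact this
  have h := hDu.mul h2
  have heq : Ga n κ = fun y => ubar n κ y * (2 * rf n κ y)⁻¹ := rfl
  rw [heq]
  refine h.congr_fderiv ?_
  ext v
  simp [Ga, Gb, Pa, Pb, smul_smul]
  have hrne : rf n κ x ≠ 0 := ne_of_gt hr
  have hune : ubar n κ x ≠ 0 := ne_of_gt hu
  field_simp
  ring_nf
  linear_combination (-64 * κ^2 * x (idxN1 n) * v (idxN1 n)) * husq

lemma hasFDerivAt_Gb {κ : ℝ} (hκ : 0 < κ) {x : E n} (hx : x ∈ (closedSlit n)ᶜ) :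
    HasFDerivAt (Gb n κ)
      ((-(κ^2 * x (idxN1 n) * (2 * x (idxN n) + rf n κ x)) / (8 * rf n κ x ^ 3 * ubar n κ x)) • Pa n +
       (κ^2 * ubar n κ x * (2 * x (idxN n) - rf n κ x) / (4 * rf n κ x ^ 3)) • Pb n) x := by
  have hq := qf_pos hκ hx
  have hr := rf_pos hκ hx
  have hs := sum_pos hκ hx
  have hu := ubar_pos hκ hx
  have husq := ubar_sq (κ := κ) x (le_of_lt hs)
  have hrsq := rf_sq (n := n) κ x
  have hDr := hasFDerivAt_rf hq
  have hDu := hasFDerivAt_ubar hκ hx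
  have hb := hasFDerivAt_coord (idxN1 n) x
  have hnum : HasFDerivAt (fun y : E n => κ^2 * y (idxN1 n)) ((κ^2:ℝ) • (Pb n)) x := hb.const_mul (κ^2)
  have hden : HasFDerivAt (fun y : E n => 4 * (rf n κ y * ubar n κ y))
      ((4:ℝ) • (rf n κ x • (Ga n κ x • Pa n + Gb n κ x • Pb n) + ubar n κ x • ((x (idxN n) / rf n κ x) • Pa n + (κ ^ 2 * x (idxN1 n) / rf n κ x) • Pb n))) x :=
    (hDr.mul hDu).const_mul 4
  have h2 : HasFDerivAt (fun y : E n => (4 * (rf n κ y * ubar n κ y))⁻¹)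
      ((-((4 * (rf n κ x * ubar n κ x))^2)⁻¹) • ((4:ℝ) • (rf n κ x • (Ga n κ x • Pa n + Gb n κ x • Pb n) + ubar n κ x • ((x (idxN n) / rf n κ x) • Pa n + (κ ^ 2 * x (idxN1 n) / rf n κ x) • Pb n)))) x := by
    have := (hasDerivAt_inv (x := 4 * (rf n κ x * ubar n κ x)) (by positivity)).comp_hasFDerivAt x hden
    exact this
  have h := hnum.mul h2
  have heq : Gb n κ = fun y => (κ^2 * y (idxN1 n)) * (4 * (rf n κ y * ubar n κ y))⁻¹ := rfl
  rw [heq]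
  refine h.congr_fderiv ?_
  ext v
  simp [Ga, Gb, Pa, Pb, smul_smul]
  have hrne : rf n κ x ≠ 0 := ne_of_gt hr
  have hune : ubar n κ x ≠ 0 := ne_of_gt hu
  have hb2 : κ^2 * x (idxN1 n) ^ 2 = rf n κ x ^ 2 - x (idxN n) ^ 2 := by
    have := rf_sq (n := n) κ x; unfold qf at this; linarith
  field_simp
  ring_nf
  linear_combination
    (v (idxN1 n) * (64 * (rf n κ x - 2 * x (idxN n)) * ubar n κ x ^ 2 + 64 * x (idxN n) ^ 2 +
      32 * (rf n κ x - 2 * x (idxN n)) * (x (idxN n) + rf n κ x))) * husq +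
    (v (idxN1 n) * (-16 * rf n κ x - 64 * ubar n κ x ^ 2)) * hb2


lemma isOpen_complSlit : IsOpen (closedSlit n)ᶜ := by
  rw [isOpen_compl_iff]
  have : closedSlit n =
      ((fun y : E n => y (idxN n)) ⁻¹' Set.Iic 0) ∩ ((fun y : E n => y (idxN1 n)) ⁻¹' {0}) := by
    ext y; simp [closedSlit]
  rw [this]
  exact (isClosed_Iic.preimage (EuclideanSpace.proj (idxN n) : E n →L[ℝ] ℝ).continuous).inter
    (isClosed_singleton.preimage (EuclideanSpace.proj (idxN1 n) : E n →L[ℝ] ℝ).continuous)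

lemma contDiffOn_ubar {κ : ℝ} (hκ : 0 < κ) :
    ContDiffOn ℝ (∞ : WithTop ℕ∞) (ubar n κ) (closedSlit n)ᶜ := by
  intro x hx
  apply ContDiffAt.contDiffWithinAt
  have hq := qf_pos hκ hx
  have hs := sum_pos hκ hx
  have hqd : ContDiffAt ℝ (∞ : WithTop ℕ∞) (qf n κ) x := by
    have h1 : ContDiff ℝ (∞ : WithTop ℕ∞) (fun y : E n => y (idxN n)) :=
      (EuclideanSpace.proj (idxN n) : E n →L[ℝ] ℝ).contDiff
    have h2 : ContDiff ℝ (∞ : WithTop ℕ∞) (fun y : E n => y (idxN1 n)) :=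
      (EuclideanSpace.proj (idxN1 n) : E n →L[ℝ] ℝ).contDiff
    have h3 : ContDiff ℝ (∞ : WithTop ℕ∞)
        (fun y : E n => y (idxN n) * y (idxN n) + (κ^2) * (y (idxN1 n) * y (idxN1 n))) :=
      (h1.mul h1).add (contDiff_const.mul (h2.mul h2))
    exact h3.contDiffAt.congr_of_eventuallyEq
      (by filter_upwards with y; unfold qf; ring)
  have hrd : ContDiffAt ℝ (∞ : WithTop ℕ∞) (rf n κ) x := hqd.sqrt (ne_of_gt hq)
  have hwd : ContDiffAt ℝ (∞ : WithTop ℕ∞) (fun y : E n => (y (idxN n) + rf n κ y) / 2) x :=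
    (((EuclideanSpace.proj (idxN n) : E n →L[ℝ] ℝ).contDiff.contDiffAt.add hrd)).div_const 2
  have := hwd.sqrt (ne_of_gt (by positivity))
  exact this

lemma pd_eq {κ : ℝ} (hκ : 0 < κ) {x : E n} (hx : x ∈ (closedSlit n)ᶜ) (j : Fin (n+1)) :
    fderiv ℝ (ubar n κ) x (EuclideanSpace.single j 1) =
      Ga n κ x * (if idxN n = j then 1 else 0) + Gb n κ x * (if idxN1 n = j then 1 else 0) := by
  rw [(hasFDerivAt_ubar hκ hx).fderiv]
  simp [Pa, Pb, EuclideanSpace.single_apply]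

lemma sum_two {m : ℕ} {f : Fin m → ℝ} {i1 i2 : Fin m} (h : i1 ≠ i2)
    (h0 : ∀ k, k ≠ i1 → k ≠ i2 → f k = 0) : ∑ k, f k = f i1 + f i2 := by
  rw [Finset.sum_eq_add_sum_sdiff_singleton_of_mem (Finset.mem_univ i1)]
  congr 1
  rw [Finset.sum_eq_single_of_mem i2 (by simp [h.symm])]
  intro b hb hbne
  exact h0 b (by simpa using (Finset.mem_sdiff.1 hb).2) hbne

end Aux

/-- properties of the homogeneous solution `ū_Ā`.
For a constant symmetric positive-definite matrix `Ā` with vanishing `(i, n+1)` entries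
(`i ≤ n`): (i) `ū_Ā` is `C^∞` away from the closed slit and solves `∑ Ā^{ij}∂_i∂_j ū_Ā = 0`
there; (ii) `ū_Ā > 0` off the closed slit and `= 0` on it; (iii) `ū_Ā` is `1/2`-homogeneous
in `x^⊥`. -/
theorem stmt7 (n : ℕ) (hn : 2 ≤ n) (A : Matrix (Fin (n + 1)) (Fin (n + 1)) ℝ)
    (hsymm : A.IsSymm) (hpos : A.PosDef)
    (hoff : ∀ i : Fin (n + 1), (i : ℕ) < n → A i (idxN1 n) = 0 ∧ A (idxN1 n) i = 0) :
    (ContDiffOn ℝ ∞ (ubar n (kappa n A)) (closedSlit n)ᶜ ∧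
      ∀ x ∈ (closedSlit n)ᶜ,
        ∑ i, ∑ j, A i j *
          fderiv ℝ (fun y => pd n (ubar n (kappa n A)) j y) x (EuclideanSpace.single i 1)
          = 0) ∧
    ((∀ x ∈ (closedSlit n)ᶜ, 0 < ubar n (kappa n A) x) ∧
      ∀ x ∈ closedSlit n, ubar n (kappa n A) x = 0) ∧
    (∀ t : ℝ, 0 < t → ∀ x : E n,
      ubar n (kappa n A) (scalePerp n t x) = t ^ ((1 : ℝ) / 2) * ubar n (kappa n A) x) := by
  have hdiag : ∀ i, 0 < A i i := by
    intro i
    exact hpos.diag_pos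
  set κ := kappa n A with hκdef
  have hAnn : 0 < A (idxN n) (idxN n) := hdiag _
  have hAm : 0 < A (idxN1 n) (idxN1 n) := hdiag _
  have hκpos : 0 < κ := Real.sqrt_pos.2 (div_pos hAnn hAm)
  have hκsq : κ^2 = A (idxN n) (idxN n) / A (idxN1 n) (idxN1 n) :=
    Real.sq_sqrt (le_of_lt (div_pos hAnn hAm))
  have hArel : A (idxN n) (idxN n) = κ^2 * A (idxN1 n) (idxN1 n) := by
    rw [hκsq]; field_simp
  have hne : idxN n ≠ idxN1 n := idx_ne hn
  have hia_lt : ((idxN n : Fin (n+1)) : ℕ) < n := by simp only [idxN]; omega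
  obtain ⟨hAab, hAba⟩ := hoff (idxN n) hia_lt
  refine ⟨⟨contDiffOn_ubar hκpos, ?_⟩, ⟨fun x hx => ubar_pos hκpos hx, ?_⟩, ?_⟩
  · -- the PDE
    intro x hx
    have hr := rf_pos hκpos hx
    have hu := ubar_pos hκpos hx
    have hGa := hasFDerivAt_Ga hκpos hx
    have hGb := hasFDerivAt_Gb hκpos hx
    have hmem : (closedSlit n)ᶜ ∈ nhds x := isOpen_complSlit.mem_nhds hx
    have hEa : (fun y => pd n (ubar n κ) (idxN n) y) =ᶠ[nhds x] Ga n κ := by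
      filter_upwards [hmem] with y hy
      show pd n (ubar n κ) (idxN n) y = Ga n κ y
      unfold pd
      rw [pd_eq hκpos hy]
      simp [hne.symm]
    have hEb : (fun y => pd n (ubar n κ) (idxN1 n) y) =ᶠ[nhds x] Gb n κ := by
      filter_upwards [hmem] with y hy
      show pd n (ubar n κ) (idxN1 n) y = Gb n κ y
      unfold pd
      rw [pd_eq hκpos hy]
      simp [hne]
    have hT0 : ∀ (i j : Fin (n+1)), j ≠ idxN n → j ≠ idxN1 n →
        fderiv ℝ (fun y => pd n (ubar n κ) j y) x (EuclideanSpace.single i 1) = 0 := by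
      intro i j h1 h2
      have hE0 : (fun y => pd n (ubar n κ) j y) =ᶠ[nhds x] (fun _ => (0:ℝ)) := by
        filter_upwards [hmem] with y hy
        show pd n (ubar n κ) j y = 0
        unfold pd
        rw [pd_eq hκpos hy]
        simp [Ne.symm h1, Ne.symm h2]
      rw [hE0.fderiv_eq, fderiv_fun_const]
      simp
    have hTa : ∀ i : Fin (n+1),
        fderiv ℝ (fun y => pd n (ubar n κ) (idxN n) y) x (EuclideanSpace.single i 1) =
          (ubar n κ x * (rf n κ x - 2 * x (idxN n)) / (4 * rf n κ x ^ 3)) *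
            (if idxN n = i then 1 else 0) +
          (-(κ^2 * x (idxN1 n) * (2 * x (idxN n) + rf n κ x)) / (8 * rf n κ x ^ 3 * ubar n κ x)) *
            (if idxN1 n = i then 1 else 0) := by
      intro i
      rw [hEa.fderiv_eq, hGa.fderiv]
      simp [Pa, Pb, EuclideanSpace.single_apply]
    have hTb : ∀ i : Fin (n+1),
        fderiv ℝ (fun y => pd n (ubar n κ) (idxN1 n) y) x (EuclideanSpace.single i 1) =
          (-(κ^2 * x (idxN1 n) * (2 * x (idxN n) + rf n κ x)) / (8 * rf n κ x ^ 3 * ubar n κ x)) *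
            (if idxN n = i then 1 else 0) +
          (κ^2 * ubar n κ x * (2 * x (idxN n) - rf n κ x) / (4 * rf n κ x ^ 3)) *
            (if idxN1 n = i then 1 else 0) := by
      intro i
      rw [hEb.fderiv_eq, hGb.fderiv]
      simp [Pa, Pb, EuclideanSpace.single_apply]
    have hinner : ∀ i : Fin (n+1),
        (∑ j, A i j * fderiv ℝ (fun y => pd n (ubar n κ) j y) x (EuclideanSpace.single i 1)) =
        A i (idxN n) * fderiv ℝ (fun y => pd n (ubar n κ) (idxN n) y) x (EuclideanSpace.single i 1)
        + A i (idxN1 n) *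
            fderiv ℝ (fun y => pd n (ubar n κ) (idxN1 n) y) x (EuclideanSpace.single i 1) := by
      intro i
      exact sum_two hne (fun k hk1 hk2 => by rw [hT0 i k hk1 hk2, mul_zero])
    calc ∑ i, ∑ j, A i j *
          fderiv ℝ (fun y => pd n (ubar n κ) j y) x (EuclideanSpace.single i 1)
        = ∑ i, (A i (idxN n) *
            fderiv ℝ (fun y => pd n (ubar n κ) (idxN n) y) x (EuclideanSpace.single i 1)
          + A i (idxN1 n) *
            fderiv ℝ (fun y => pd n (ubar n κ) (idxN1 n) y) x (EuclideanSpace.single i 1)) := by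
          exact Finset.sum_congr rfl (fun i _ => hinner i)
      _ = 0 := by
          rw [sum_two hne (fun k hk1 hk2 => by
            rw [hTa k, hTb k, if_neg (fun h => hk1 h.symm), if_neg (fun h => hk2 h.symm)]
            ring)]
          rw [hTa (idxN n), hTa (idxN1 n), hTb (idxN n), hTb (idxN1 n)]
          rw [if_pos rfl, if_pos rfl, if_neg hne, if_neg hne.symm, hAab, hAba, hArel]
          have hrne : rf n κ x ≠ 0 := ne_of_gt hr
          have hune : ubar n κ x ≠ 0 := ne_of_gt hu
          field_simp
          ring
  · -- zero on the slit
    intro x hx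
    obtain ⟨h1, h2⟩ := hx
    show Real.sqrt _ = 0
    rw [h2]
    norm_num
    rw [Real.sqrt_sq_eq_abs, abs_of_nonpos h1]
    simp
  · -- homogeneity
    intro t ht x
    have hA : scalePerp n t x (idxN n) = t * x (idxN n) := by
      simp only [scalePerp, idxN]
      rw [if_neg (by omega)]
    have hB : scalePerp n t x (idxN1 n) = t * x (idxN1 n) := by
      simp only [scalePerp, idxN1]
      rw [if_neg (by omega)]
    show Real.sqrt _ = _
    rw [hA, hB, ← Real.sqrt_eq_rpow]
    have h1 : (t * x (idxN n))^2 + κ^2 * (t * x (idxN1 n))^2 =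
        t^2 * ((x (idxN n))^2 + κ^2 * (x (idxN1 n))^2) := by ring
    rw [h1, Real.sqrt_mul (sq_nonneg t), Real.sqrt_sq ht.le]
    have h2 : (t * x (idxN n) + t * Real.sqrt ((x (idxN n))^2 + κ^2 * (x (idxN1 n))^2)) / 2 =
        t * ((x (idxN n) + Real.sqrt ((x (idxN n))^2 + κ^2 * (x (idxN1 n))^2)) / 2) := by ring
    rw [h2, Real.sqrt_mul ht.le]
    rfl
end
end
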